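/- Let γ > −1 and C > 0. There exist β ≥ 1 and C₀ > 0, depending only on n, γ, p and C, such that the function v(x,t) = C₀(1 − |x + e_n|^{−β}) − t satisfies, at every point of Q₁⁺ = B₁⁺ × (−1,0] and for every a ∈ ℝⁿ with |a| ≤ 1 and every ε ∈ [0,1] with |Dv + a|² + ε² > 0: v_t − (|Dv + a|² + ε²)^{γ/2} · Tr(A[Dv+a] D²v) > 0, where A[z] = I + (p−2) z⊗z/(|z|²+ε²); moreover v ≥ 0 on S₁, v ≥ 1 on ∂_p Q₁⁺ \ S₁, and v(0′, x_n, 0) ≤ C′ x_n for 0 ≤ x_n ≤ 1/2 with C′ depending only on C₀, β. -/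

import Mathlib

/-- Time derivative. -/
noncomputable def timeDeriv {n : ℕ} (u : (Fin n → ℝ) → ℝ → ℝ)
    (x : Fin n → ℝ) (t : ℝ) : ℝ :=
  deriv (fun s => u x s) t

/-- Spatial partial derivative `u_i`. -/
noncomputable def spaceGrad {n : ℕ} (u : (Fin n → ℝ) → ℝ → ℝ)
    (x : Fin n → ℝ) (t : ℝ) (i : Fin n) : ℝ :=
  fderiv ℝ (fun y => u y t) x (Pi.single i 1)

/-- Spatial second derivative `u_{ij}`. -/
noncomputable def spaceHess {n : ℕ} (u : (Fin n → ℝ) → ℝ → ℝ)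
    (x : Fin n → ℝ) (t : ℝ) (i j : Fin n) : ℝ :=
  fderiv ℝ (fun y => spaceGrad u y t j) x (Pi.single i 1)

/-- The operator `v_t - (|Dv+a|²+ε²)^{γ/2} Tr(A[Dv+a] D²v)` where
`A[z] = I + (p-2) z⊗z/(|z|²+ε²)` (the operator `P^ε_{a,1}`). -/
noncomputable def Pop {n : ℕ} (γ p ε : ℝ) (a : Fin n → ℝ)
    (v : (Fin n → ℝ) → ℝ → ℝ) (x : Fin n → ℝ) (t : ℝ) : ℝ :=
  timeDeriv v x t -
    ((∑ i, (spaceGrad v x t i + a i) ^ 2 + ε ^ 2) ^ (γ / 2)) *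
      ∑ i, ∑ j,
        (((if i = j then (1 : ℝ) else 0) +
          (p - 2) * (spaceGrad v x t i + a i) * (spaceGrad v x t j + a j) /
            (∑ k, (spaceGrad v x t k + a k) ^ 2 + ε ^ 2)) * spaceHess v x t i j)

/-- The barrier `v(x,t) = C₀(1 - |x + e_n|^{-β}) - t`. -/
noncomputable def barrierV {n : ℕ} (C₀ β : ℝ) (x : Fin (n + 1) → ℝ) (t : ℝ) : ℝ :=
  C₀ * (1 - (Real.sqrt (∑ i, (x i + (if i = Fin.last n then (1 : ℝ) else 0)) ^ 2)) ^ (-β)) - t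

noncomputable def ee (n : ℕ) : Fin (n+1) → ℝ := fun i => if i = Fin.last n then 1 else 0

noncomputable def gg (n : ℕ) (x : Fin (n+1) → ℝ) : ℝ := ∑ i, (x i + ee n i)^2

lemma gg_nonneg {n : ℕ} (x : Fin (n+1) → ℝ) : 0 ≤ gg n x :=
  Finset.sum_nonneg fun i _ => sq_nonneg _

lemma gg_cont {n : ℕ} : Continuous (gg n) := by
  unfold gg
  exact continuous_finset_sum _ fun i _ => ((continuous_apply i).add continuous_const).pow 2

lemma hasFDerivAt_gg {n : ℕ} (x : Fin (n+1) → ℝ) :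
    HasFDerivAt (gg n)
      (∑ i, ((2:ℝ) * (x i + ee n i)) •
        (ContinuousLinearMap.proj (R := ℝ) (φ := fun _ : Fin (n+1) => ℝ) i)) x := by
  have h : ∀ i ∈ Finset.univ (α := Fin (n+1)),
      HasFDerivAt (fun y : Fin (n+1) → ℝ => (y i + ee n i)^2)
        (((2:ℝ) * (x i + ee n i)) •
          (ContinuousLinearMap.proj (R := ℝ) (φ := fun _ : Fin (n+1) => ℝ) i)) x := by
    intro i _
    have h1 : HasFDerivAt (fun y : Fin (n+1) → ℝ => y i + ee n i)
        (ContinuousLinearMap.proj (R := ℝ) (φ := fun _ : Fin (n+1) => ℝ) i) x := by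
      simpa using ((ContinuousLinearMap.proj (R := ℝ)
        (φ := fun _ : Fin (n+1) => ℝ) i).hasFDerivAt (x := x)).add_const (ee n i)
    have h2 := h1.fun_mul h1
    have : HasFDerivAt (fun y : Fin (n+1) → ℝ => (y i + ee n i) * (y i + ee n i))
        (((2:ℝ) * (x i + ee n i)) •
          (ContinuousLinearMap.proj (R := ℝ) (φ := fun _ : Fin (n+1) => ℝ) i)) x := by
      refine h2.congr_fderiv ?_
      rw [two_mul]; exact (add_smul _ _ _).symm
    simpa [pow_two] using this
  exact HasFDerivAt.fun_sum h

lemma clm_sum_apply_single {n : ℕ} (c : Fin (n+1) → ℝ) (j : Fin (n+1)) :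
    (∑ i, (c i) • (ContinuousLinearMap.proj (R := ℝ) (φ := fun _ : Fin (n+1) => ℝ) i))
      (Pi.single j 1) = c j := by
  rw [ContinuousLinearMap.sum_apply]
  simp only [ContinuousLinearMap.smul_apply, ContinuousLinearMap.proj_apply, Pi.single_apply,
    smul_eq_mul, mul_ite, mul_one, mul_zero]
  rw [Finset.sum_ite_eq']
  simp

lemma barrier_eq {n : ℕ} (C₀ β : ℝ) (x : Fin (n+1) → ℝ) (t : ℝ) :
    barrierV C₀ β x t = C₀ * (1 - (gg n x) ^ (-(β/2))) - t := by
  have h0 : (0:ℝ) ≤ ∑ i, (x i + (if i = Fin.last n then (1:ℝ) else 0)) ^ 2 :=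
    Finset.sum_nonneg fun i _ => sq_nonneg _
  unfold barrierV
  rw [Real.sqrt_eq_rpow, ← Real.rpow_mul h0, show (1/2 : ℝ) * (-β) = -(β/2) by ring]
  rfl

lemma timeDeriv_barrier {n : ℕ} (C₀ β : ℝ) (x : Fin (n+1) → ℝ) (t : ℝ) :
    timeDeriv (barrierV C₀ β) x t = -1 := by
  unfold timeDeriv
  have : (fun s => barrierV C₀ β x s) =
      fun s => (C₀ * (1 - (Real.sqrt (∑ i, (x i + (if i = Fin.last n then (1:ℝ) else 0)) ^ 2)) ^ (-β))) - s := rfl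
  rw [this]
  exact ((hasDerivAt_id t).const_sub _).deriv

lemma spaceGrad_barrier {n : ℕ} (C₀ β t : ℝ) (x : Fin (n+1) → ℝ) (hx : gg n x ≠ 0) (j : Fin (n+1)) :
    spaceGrad (barrierV C₀ β) x t j = C₀ * β * (gg n x) ^ (-(β/2) - 1) * (x j + ee n j) := by
  have hg := hasFDerivAt_gg x
  have hr : HasDerivAt (fun u : ℝ => u ^ (-(β/2))) ((-(β/2)) * (gg n x) ^ (-(β/2) - 1)) (gg n x) :=
    Real.hasDerivAt_rpow_const (Or.inl hx)
  have hc : HasFDerivAt (fun y => (gg n y) ^ (-(β/2)))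
      (((-(β/2)) * (gg n x) ^ (-(β/2) - 1)) •
        (∑ i, ((2:ℝ) * (x i + ee n i)) •
          (ContinuousLinearMap.proj (R := ℝ) (φ := fun _ : Fin (n+1) => ℝ) i))) x :=
    hr.comp_hasFDerivAt x hg
  have h2 := ((hc.const_sub 1).const_mul C₀).sub_const t
  have h3 : (fun y => barrierV C₀ β y t) =
      fun y => C₀ * (1 - (gg n y) ^ (-(β/2))) - t := funext fun y => barrier_eq C₀ β y t
  unfold spaceGrad
  rw [h3, h2.fderiv]
  have hv := clm_sum_apply_single (fun i => (2:ℝ) * (x i + ee n i)) j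
  simp only [ContinuousLinearMap.coe_smul', Pi.smul_apply, ContinuousLinearMap.coe_neg',
    Pi.neg_apply, smul_eq_mul, hv]
  ring

lemma spaceHess_barrier {n : ℕ} (C₀ β t : ℝ) (x : Fin (n+1) → ℝ) (hx : gg n x ≠ 0)
    (i j : Fin (n+1)) :
    spaceHess (barrierV C₀ β) x t i j =
      C₀ * β * ((gg n x) ^ (-(β/2) - 1) * (if i = j then 1 else 0)
        - (β + 2) * (gg n x) ^ (-(β/2) - 2) * (x i + ee n i) * (x j + ee n j)) := by
  have hU : IsOpen {y : Fin (n+1) → ℝ | gg n y ≠ 0} :=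
    isOpen_compl_iff.mpr (isClosed_singleton.preimage gg_cont)
  have hev : (fun y => spaceGrad (barrierV C₀ β) y t j) =ᶠ[nhds x]
      (fun y => (C₀ * β) * ((gg n y) ^ (-(β/2) - 1) * (y j + ee n j))) := by
    filter_upwards [hU.mem_nhds hx] with y hy
    rw [spaceGrad_barrier C₀ β t y hy j]; ring
  unfold spaceHess
  rw [hev.fderiv_eq]
  have hg := hasFDerivAt_gg x
  have hr : HasDerivAt (fun u : ℝ => u ^ (-(β/2) - 1))
      ((-(β/2) - 1) * (gg n x) ^ (-(β/2) - 1 - 1)) (gg n x) :=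
    Real.hasDerivAt_rpow_const (Or.inl hx)
  have hc : HasFDerivAt (fun y => (gg n y) ^ (-(β/2) - 1))
      (((-(β/2) - 1) * (gg n x) ^ (-(β/2) - 1 - 1)) •
        (∑ k, ((2:ℝ) * (x k + ee n k)) •
          (ContinuousLinearMap.proj (R := ℝ) (φ := fun _ : Fin (n+1) => ℝ) k))) x :=
    hr.comp_hasFDerivAt x hg
  have hl : HasFDerivAt (fun y : Fin (n+1) → ℝ => y j + ee n j)
      (ContinuousLinearMap.proj (R := ℝ) (φ := fun _ : Fin (n+1) => ℝ) j) x := by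
    simpa using ((ContinuousLinearMap.proj (R := ℝ)
      (φ := fun _ : Fin (n+1) => ℝ) j).hasFDerivAt (x := x)).add_const (ee n j)
  have hm := (hc.fun_mul hl).const_mul (C₀ * β)
  rw [hm.fderiv]
  simp only [ContinuousLinearMap.coe_smul', Pi.smul_apply, ContinuousLinearMap.add_apply,
    ContinuousLinearMap.smul_apply, ContinuousLinearMap.proj_apply, smul_eq_mul]
  rw [clm_sum_apply_single]
  have hsingle : (Pi.single i (1:ℝ) : Fin (n+1) → ℝ) j = if i = j then 1 else 0 := by
    rw [Pi.single_apply]; simp [eq_comm]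
  rw [hsingle]
  have hexp : (gg n x) ^ (-(β/2) - 1 - 1) = (gg n x) ^ (-(β/2) - 2) := by
    congr 1; ring
  rw [hexp]; ring

lemma double_sum_eq {m : ℕ} (c d A B : ℝ) (Y z : Fin m → ℝ) :
    (∑ i, ∑ j, (((if i = j then (1:ℝ) else 0) + c * z i * z j / d) *
      (A * (if i = j then 1 else 0) + B * (Y i * Y j))))
    = A * m + B * (∑ i, (Y i)^2) + (c / d) * A * (∑ i, (z i)^2)
      + (c / d) * B * (∑ i, Y i * z i)^2 := by
  have key : ∀ i : Fin m, (∑ j, (((if i = j then (1:ℝ) else 0) + c * z i * z j / d) *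
      (A * (if i = j then 1 else 0) + B * (Y i * Y j))))
      = (A + B * (Y i)^2 + (c/d) * A * (z i)^2)
        + ((c/d) * B * (Y i * z i)) * (∑ j, Y j * z j) := by
    intro i
    have hterm : ∀ j : Fin m, (((if i = j then (1:ℝ) else 0) + c * z i * z j / d) *
        (A * (if i = j then 1 else 0) + B * (Y i * Y j)))
        = (if i = j then (A + B * (Y i)^2 + (c/d) * A * (z i)^2) else 0)
          + ((c/d) * B * (Y i * z i)) * (Y j * z j) := by
      intro j
      by_cases h : i = j
      · subst h; simp only [if_pos rfl, ite_true, eq_self_iff_true]; field_simp; ring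
      · simp only [if_neg h]; field_simp; ring
    rw [Finset.sum_congr rfl fun j _ => hterm j, Finset.sum_add_distrib,
      Finset.sum_ite_eq, ← Finset.mul_sum]
    simp only [Finset.mem_univ, if_pos]
  rw [Finset.sum_congr rfl fun i _ => key i, Finset.sum_add_distrib, Finset.sum_add_distrib,
    Finset.sum_add_distrib, Finset.sum_const, ← Finset.mul_sum, ← Finset.mul_sum]
  simp only [Finset.card_univ, Fintype.card_fin, nsmul_eq_mul]
  have : (∑ i, ((c/d) * B * (Y i * z i)) * (∑ j, Y j * z j))
      = ((c/d) * B) * (∑ i, Y i * z i)^2 := by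
    rw [← Finset.sum_mul]
    rw [← Finset.mul_sum]
    ring
  rw [this]
  ring

lemma gg_eq {n : ℕ} (x : Fin (n+1) → ℝ) :
    gg n x = (∑ i, (x i)^2) + 2 * x (Fin.last n) + 1 := by
  unfold gg ee
  have h : ∀ i : Fin (n+1), (x i + if i = Fin.last n then (1:ℝ) else 0)^2
      = (x i)^2 + ((if i = Fin.last n then 2 * x i else 0) + (if i = Fin.last n then (1:ℝ) else 0)) := by
    intro i; by_cases h : i = Fin.last n <;> simp [h] <;> ring
  rw [Finset.sum_congr rfl fun i _ => h i, Finset.sum_add_distrib, Finset.sum_add_distrib,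
    Finset.sum_ite_eq', Finset.sum_ite_eq']
  simp only [Finset.mem_univ, if_pos]
  ring


set_option maxHeartbeats 2000000 in
lemma scalar_main (n : ℕ) (γ p β K ε s q q' w P Pa A2 : ℝ)
    (hγ : -1 < γ) (hp : 1 < p)
    (hβ1 : 1 ≤ β) (hβa : (n:ℝ) + p ≤ β) (hβb : ((n:ℝ) + 4) / (p-1) + 2 ≤ β)
    (hK1 : (2:ℝ)^(β+2) ≤ K) (hK2 : (2:ℝ) ≤ K)
    (hKθ : ((2:ℝ) * 4 ^ (β/2+1)) ^ (1/(1 + min γ 0)) ≤ K)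
    (hε0 : 0 ≤ ε) (hε1 : ε ≤ 1)
    (hs1 : 1 < s) (hs4 : s < 4)
    (hqdef : q = s ^ (-(β/2)-1)) (hq'def : q' = s ^ (-(β/2)-2))
    (hA20 : 0 ≤ A2) (hA21 : A2 ≤ 1)
    (hPa : Pa^2 ≤ s * A2)
    (hw_expand : w = (K*q)*(K*q)*s + (2*(K*q))*Pa + A2)
    (hP2 : P^2 ≤ s * w) :
    0 < -1 - (w + ε^2)^(γ/2) * (K * q * ((n + 1 : ℕ):ℝ) + -(K * ((β + 2) * q')) * s
      + (p-2)/(w+ε^2)*(K*q)*w + (p-2)/(w+ε^2)*(-(K*((β+2)*q')))*P^2) := by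
  have hs0 : (0:ℝ) < s := lt_trans one_pos hs1
  have hq0 : 0 < q := by rw [hqdef]; exact Real.rpow_pos_of_pos hs0 _
  have hq'0 : 0 < q' := by rw [hq'def]; exact Real.rpow_pos_of_pos hs0 _
  have hK0 : (0:ℝ) < K := lt_of_lt_of_le two_pos hK2
  have hqs : q' * s = q := by
    rw [hqdef, hq'def, ← Real.rpow_add_one (ne_of_gt hs0)]
    congr 1; ring
  set m := K * s ^ (-(β+1)/2) with hmdef
  clear_value m
  have hrp0 : (0:ℝ) < s ^ (-(β+1)/2) := Real.rpow_pos_of_pos hs0 _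
  have hm0 : 0 < m := by rw [hmdef]; exact mul_pos hK0 hrp0
  have key : s ^ (-(β+1)/2) * s ^ (-(β+1)/2) = s ^ (-(β+1)) := by
    rw [← Real.rpow_add hs0]; congr 1; ring
  have key2 : q * q * s = s ^ (-(β+1)) := by
    rw [hqdef, ← Real.rpow_add hs0, ← Real.rpow_add_one (ne_of_gt hs0)]
    congr 1; ring
  have hm_sq : (K*q)*(K*q)*s = m^2 := by
    rw [hmdef, show (K * s ^ (-(β+1)/2))^2 = K*K*(s ^ (-(β+1)/2) * s ^ (-(β+1)/2)) from by ring,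
      key, show (K*q)*(K*q)*s = K*K*(q*q*s) from by ring, key2]
  have hm2 : 2 ≤ m := by
    rw [hmdef]
    have h4 : (4:ℝ) ^ (-(β+1)/2) ≤ s ^ (-(β+1)/2) :=
      Real.rpow_le_rpow_of_nonpos hs0 hs4.le (by linarith : -(β+1)/2 ≤ 0)
    have h42 : (4:ℝ) ^ (-(β+1)/2) = (2:ℝ) ^ (-(β+1)) := by
      rw [show (4:ℝ) = (2:ℝ)^(2:ℝ) from by
        rw [show (2:ℝ) = ((2:ℕ):ℝ) from by norm_num] at *
        rw [Real.rpow_natCast]; norm_num, ← Real.rpow_mul (by norm_num : (0:ℝ) ≤ 2)]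
      congr 1; ring
    have h2K : (2:ℝ)^(β+2) * (2:ℝ)^(-(β+1)) = 2 := by
      rw [← Real.rpow_add two_pos, show β+2+(-(β+1)) = 1 from by ring, Real.rpow_one]
    calc (2:ℝ) = 2^(β+2) * 2^(-(β+1)) := h2K.symm
      _ ≤ K * s ^ (-(β+1)/2) := by
          apply mul_le_mul hK1 (by rw [← h42]; exact h4)
            (le_of_lt (Real.rpow_pos_of_pos two_pos _))
            (le_of_lt hK0)
  have hm_leK : m ≤ K := by
    have h : s ^ (-(β+1)/2) ≤ 1 :=
      Real.rpow_le_one_of_one_le_of_nonpos hs1.le (by linarith : -(β+1)/2 ≤ 0)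
    calc m = K * s ^ (-(β+1)/2) := hmdef
      _ ≤ K * 1 := by apply mul_le_mul_of_nonneg_left h hK0.le
      _ = K := mul_one K
  set u := Real.sqrt A2 with hudef
  clear_value u
  have hu0 : 0 ≤ u := by rw [hudef]; exact Real.sqrt_nonneg _
  have hu1 : u ≤ 1 := by
    rw [hudef, show (1:ℝ) = Real.sqrt 1 from Real.sqrt_one.symm]
    exact Real.sqrt_le_sqrt hA21
  have huu : u^2 = A2 := by rw [hudef]; exact Real.sq_sqrt hA20
  have hcross_sq : (K*q*Pa)^2 ≤ (m*u)^2 := by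
    have h1 : (K*q*Pa)^2 = ((K*q)*(K*q)) * Pa^2 := by ring
    have h2 : ((K*q)*(K*q)) * Pa^2 ≤ ((K*q)*(K*q)) * (s * A2) := by
      apply mul_le_mul_of_nonneg_left hPa (by positivity)
    have h3 : ((K*q)*(K*q)) * (s * A2) = (m*u)^2 := by
      rw [show ((K*q)*(K*q)) * (s * A2) = ((K*q)*(K*q)*s) * A2 from by ring,
        hm_sq, ← huu]; ring
    linarith
  have hcross := abs_le_of_sq_le_sq' hcross_sq (by positivity)
  have hw2 : w = m^2 + (2*(K*q))*Pa + A2 := by rw [hw_expand, hm_sq]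
  have hmu1 : 1 ≤ m - u := by linarith
  have hmu2 : 1 ≤ (m-u)^2 := by
    have h := mul_le_mul hmu1 hmu1 zero_le_one (by linarith : (0:ℝ) ≤ m - u)
    calc (1:ℝ) = 1*1 := by ring
      _ ≤ (m-u)*(m-u) := h
      _ = (m-u)^2 := by ring
  have hw_lb : 1 ≤ w := by linarith [hmu2, hcross.1, huu, hw2]
  have hmuK : m + u ≤ K + 1 := by linarith
  have hmuK2 : (m+u)^2 ≤ (K+1)^2 := pow_le_pow_left₀ (by linarith) hmuK 2
  have hw_ub : w ≤ (K+1)^2 := by linarith [hcross.2, huu, hw2, hmuK2]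
  have hε2 : ε^2 ≤ 1 := by rw [pow_two]; exact mul_le_one₀ hε1 hε0 hε1
  have hd1 : 1 ≤ w + ε^2 := by linarith [sq_nonneg ε]
  have hd0 : (0:ℝ) < w + ε^2 := lt_of_lt_of_le one_pos hd1
  have hd_ub : w + ε^2 ≤ (K+2)^2 := by
    have hr : (K+2)^2 - ((K+1)^2 + 1) = 2*K + 2 := by ring
    linarith [hw_ub, hε2, hK2, hr]
  have hM0 : (0:ℝ) < (w + ε^2)^(γ/2) := Real.rpow_pos_of_pos hd0 _
  have hMlb : (K+2) ^ (min γ 0) ≤ (w + ε^2)^(γ/2) := by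
    rcases le_or_gt 0 γ with h0 | h0
    · rw [min_eq_right h0, Real.rpow_zero]
      calc (1:ℝ) = (w + ε^2)^(0:ℝ) := (Real.rpow_zero _).symm
        _ ≤ (w + ε^2)^(γ/2) :=
          Real.rpow_le_rpow_of_exponent_le hd1 (by linarith)
    · rw [min_eq_left h0.le]
      have h1 : ((K+2)^(2:ℕ) : ℝ)^(γ/2) ≤ (w + ε^2)^(γ/2) :=
        Real.rpow_le_rpow_of_nonpos hd0 hd_ub (by linarith)
      rw [← Real.rpow_natCast (K+2) 2, ← Real.rpow_mul (by linarith : (0:ℝ) ≤ K+2)] at h1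
      have h2 : ((2:ℕ):ℝ) * (γ/2) = γ := by push_cast; ring
      rw [h2] at h1
      exact h1
  have hmin : -1 < min γ 0 := lt_min hγ (by norm_num)
  have hθ0 : 0 < 1 + min γ 0 := by linarith
  have hR0 : (0:ℝ) < 2 * 4^(β/2+1) := by positivity
  have hT1 : (4:ℝ)^(β/2+1) ≤ (K+2)^(min γ 0) * K := by
    have h2 : ((2 * 4^(β/2+1) : ℝ)^(1/(1 + min γ 0)))^(1 + min γ 0) ≤ (K+2)^(1 + min γ 0) :=
      Real.rpow_le_rpow (Real.rpow_nonneg hR0.le _) (le_trans hKθ (by linarith)) hθ0.le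
    have h3 : ((2 * 4^(β/2+1) : ℝ)^(1/(1 + min γ 0)))^(1 + min γ 0) = 2 * 4^(β/2+1) := by
      rw [← Real.rpow_mul hR0.le, one_div_mul_cancel (ne_of_gt hθ0), Real.rpow_one]
    rw [h3] at h2
    have hK2pos : (0:ℝ) < K + 2 := by linarith
    have h4 : (K+2)^(min γ 0) = (K+2)^(1 + min γ 0) * (K+2)⁻¹ := by
      rw [← Real.rpow_neg_one (K+2), ← Real.rpow_add hK2pos]
      congr 1; ring
    have h5 : (1:ℝ)/2 ≤ (K+2)⁻¹ * K := by
      rw [inv_mul_eq_div, le_div_iff₀ hK2pos]; linarith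
    calc (4:ℝ)^(β/2+1) = (2 * 4^(β/2+1)) * (1/2) := by ring
      _ ≤ (K+2)^(1 + min γ 0) * ((K+2)⁻¹ * K) := by
          apply mul_le_mul h2 h5 (by norm_num) (Real.rpow_nonneg hK2pos.le _)
      _ = (K+2)^(min γ 0) * K := by rw [h4]; ring
  have hq_lt : (4:ℝ)^(-(β/2)-1) < q := by
    rw [hqdef]
    exact Real.rpow_lt_rpow_of_neg hs0 hs4 (by linarith : -(β/2)-1 < 0)
  have hTpos : (0:ℝ) < (K+2)^(min γ 0) * K :=
    mul_pos (Real.rpow_pos_of_pos (by linarith) _) hK0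
  have hMKq : 1 < (w + ε^2)^(γ/2) * (K*q) := by
    have h7 : (4:ℝ)^(β/2+1) * (4:ℝ)^(-(β/2)-1) = 1 := by
      rw [← Real.rpow_add (by norm_num : (0:ℝ) < 4), show (β/2+1) + (-(β/2)-1) = 0 from by ring,
        Real.rpow_zero]
    have hKq0 : 0 < K * q := mul_pos hK0 hq0
    calc (1:ℝ) = 4^(β/2+1) * 4^(-(β/2)-1) := h7.symm
      _ ≤ ((K+2)^(min γ 0) * K) * 4^(-(β/2)-1) := by
          apply mul_le_mul_of_nonneg_right hT1 (Real.rpow_nonneg (by norm_num) _)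
      _ < ((K+2)^(min γ 0) * K) * q := by
          apply mul_lt_mul_of_pos_left hq_lt hTpos
      _ = (K+2)^(min γ 0) * (K * q) := by ring
      _ ≤ (w + ε^2)^(γ/2) * (K*q) := mul_le_mul_of_nonneg_right hMlb hKq0.le
  have hβn0 : (0:ℝ) < β - n := by linarith
  have hF : (p-2)*(q*w - (β+2)*(q'*P^2)) ≤ (β - (n:ℝ))*(q*(w+ε^2)) := by
    have hqP : 0 ≤ q'*P^2 := mul_nonneg hq'0.le (sq_nonneg _)
    have hqw : q*w ≤ q*(w+ε^2) := by
      have hr : q*(w+ε^2) - q*w = q*ε^2 := by ring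
      have h0 : 0 ≤ q*ε^2 := mul_nonneg hq0.le (sq_nonneg ε)
      linarith
    have hqw0 : 0 ≤ q*w := mul_nonneg hq0.le (by linarith)
    rcases le_or_gt 2 p with h2p | h2p
    · have l0 : 0 ≤ (p-2)*((β+2)*(q'*P^2)) :=
        mul_nonneg (by linarith) (mul_nonneg (by linarith) hqP)
      have l1 : (p-2)*(q*w - (β+2)*(q'*P^2)) ≤ (p-2)*(q*w) := by
        have hr : (p-2)*(q*w) - (p-2)*(q*w - (β+2)*(q'*P^2)) = (p-2)*((β+2)*(q'*P^2)) := by ring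
        linarith [l0, hr]
      have l2 : (p-2)*(q*w) ≤ (β - (n:ℝ))*(q*(w+ε^2)) := by
        apply mul_le_mul (by linarith) hqw hqw0 (by linarith)
      linarith
    · have key2' : q'*P^2 ≤ q*w := by
        calc q'*P^2 ≤ q'*(s*w) := mul_le_mul_of_nonneg_left hP2 hq'0.le
          _ = (q'*s)*w := by ring
          _ = q*w := by rw [hqs]
      have h6 : (0:ℝ) ≤ 2-p := by linarith
      have h7 : (2-p)*((β+2)*(q'*P^2)) ≤ (2-p)*((β+2)*(q*w)) :=
        mul_le_mul_of_nonneg_left (mul_le_mul_of_nonneg_left key2' (by linarith)) h6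
      have l1 : (p-2)*(q*w - (β+2)*(q'*P^2)) ≤ (2-p)*(β+1)*(q*w) := by
        have hr1 : (p-2)*(q*w - (β+2)*(q'*P^2)) = (2-p)*((β+2)*(q'*P^2)) - (2-p)*(q*w) := by ring
        have hr2 : (2-p)*((β+2)*(q*w)) - (2-p)*(q*w) = (2-p)*(β+1)*(q*w) := by ring
        linarith [h7, hr1, hr2]
      have hco : (2-p)*(β+1) ≤ β - (n:ℝ) := by
        have hpm : (0:ℝ) < p - 1 := by linarith
        have hdiv : ((n:ℝ)+4)/(p-1)*(p-1) = (n:ℝ)+4 := div_mul_cancel₀ _ (ne_of_gt hpm)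
        have hmul := mul_le_mul_of_nonneg_right hβb hpm.le
        have hr : (((n:ℝ)+4)/(p-1)+2)*(p-1) = ((n:ℝ)+4)/(p-1)*(p-1) + 2*(p-1) := by ring
        linarith [hmul, hr, hdiv, hp]
      have l2 : (2-p)*(β+1)*(q*w) ≤ (β - (n:ℝ))*(q*(w+ε^2)) := by
        apply mul_le_mul hco hqw hqw0 (by linarith)
      linarith
  have hdne : (w + ε^2) ≠ 0 := ne_of_gt hd0
  have e1 : (p-2)/(w+ε^2)*(K*q)*w + (p-2)/(w+ε^2)*(-(K*((β+2)*q')))*P^2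
      = K*((p-2)*(q*w - (β+2)*(q'*P^2)))/(w+ε^2) := by
    field_simp; ring
  have hfrac : K*((p-2)*(q*w - (β+2)*(q'*P^2)))/(w+ε^2) ≤ K*(β - (n:ℝ))*q := by
    rw [div_le_iff₀ hd0]
    calc K*((p-2)*(q*w - (β+2)*(q'*P^2))) ≤ K*((β - (n:ℝ))*(q*(w+ε^2))) :=
        mul_le_mul_of_nonneg_left hF hK0.le
      _ = K*(β - (n:ℝ))*q*(w+ε^2) := by ring
  have hAB : K * q * ((n + 1 : ℕ):ℝ) + -(K * ((β + 2) * q')) * s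
      = K*q*((n:ℝ)+1) - K*(β+2)*q := by
    push_cast
    linear_combination (-(K*(β+2))) * hqs
  have hfinal : K*q*((n:ℝ)+1) - K*(β+2)*q + K*(β - (n:ℝ))*q = -(K*q) := by ring
  have hE : K * q * ((n + 1 : ℕ):ℝ) + -(K * ((β + 2) * q')) * s
      + (p-2)/(w+ε^2)*(K*q)*w + (p-2)/(w+ε^2)*(-(K*((β+2)*q')))*P^2 ≤ -(K*q) := by
    linarith [e1, hfrac, hAB, hfinal]
  have hME := mul_le_mul_of_nonneg_left hE hM0.le
  have hneg : (w + ε^2)^(γ/2) * (-(K*q)) = -((w + ε^2)^(γ/2) * (K*q)) := by ring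
  linarith [hME, hMKq]

set_option maxHeartbeats 2000000 in
lemma pde_bullet {n : ℕ} (γ p β C₀ : ℝ) (hγ : -1 < γ) (hp : 1 < p)
    (hβ1 : 1 ≤ β) (hβa : (n:ℝ) + p ≤ β) (hβb : ((n:ℝ) + 4) / (p-1) + 2 ≤ β)
    (hK1 : (2:ℝ)^(β+2) ≤ C₀ * β)
    (hK2 : (2:ℝ) ≤ C₀ * β)
    (hKθ : ((2:ℝ) * 4 ^ (β/2+1)) ^ (1/(1 + min γ 0)) ≤ C₀ * β)
    (a : Fin (n + 1) → ℝ) (ε : ℝ)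
    (ha : (∑ i, (a i) ^ 2) ≤ 1) (hε : ε ∈ Set.Icc (0 : ℝ) 1)
    (x : Fin (n + 1) → ℝ) (t : ℝ)
    (hxb : (∑ i, (x i) ^ 2) < 1) (hxn : 0 < x (Fin.last n)) (ht : t ∈ Set.Ioc (-1 : ℝ) 0) :
    0 < Pop γ p ε a (barrierV C₀ β) x t := by
  have hsum0 : (0:ℝ) ≤ ∑ i, (x i)^2 := Finset.sum_nonneg fun i _ => sq_nonneg _
  have hs1 : 1 < gg n x := by rw [gg_eq]; nlinarith
  have hxl2 : (x (Fin.last n))^2 < 1 :=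
    lt_of_le_of_lt (Finset.single_le_sum (f := fun i => (x i)^2)
      (fun i _ => sq_nonneg _) (Finset.mem_univ _)) hxb
  have hs4 : gg n x < 4 := by
    rw [gg_eq]; nlinarith [sq_nonneg (x (Fin.last n) - 1)]
  have hs0 : (0:ℝ) < gg n x := lt_trans one_pos hs1
  have hsne : gg n x ≠ 0 := ne_of_gt hs0
  unfold Pop
  rw [timeDeriv_barrier]
  simp only [spaceGrad_barrier C₀ β t x hsne, spaceHess_barrier C₀ β t x hsne]
  have hfac : ∀ i j : Fin (n+1),
      C₀ * β * (gg n x ^ (-(β/2)-1) * (if i = j then (1:ℝ) else 0)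
        - (β+2) * gg n x ^ (-(β/2)-2) * (x i + ee n i) * (x j + ee n j))
      = (C₀ * β * gg n x ^ (-(β/2)-1)) * (if i = j then (1:ℝ) else 0)
        + (-(C₀ * β * ((β+2) * gg n x ^ (-(β/2)-2)))) * ((x i + ee n i) * (x j + ee n j)) :=
    fun i j => by ring
  simp only [hfac]
  rw [double_sum_eq]
  have hS : (∑ i : Fin (n+1), (x i + ee n i)^2) = gg n x := rfl
  rw [hS]
  refine scalar_main n γ p β (C₀*β) ε (gg n x) _ _ _ _
      (∑ i, (x i + ee n i) * a i) (∑ i, (a i)^2)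
      hγ hp hβ1 hβa hβb hK1 hK2 hKθ hε.1 hε.2 hs1 hs4 rfl rfl
      (Finset.sum_nonneg fun i _ => sq_nonneg _) ha
      (Finset.sum_mul_sq_le_sq_mul_sq _ _ _)
      ?_ (Finset.sum_mul_sq_le_sq_mul_sq _ _ _)
  have hterm : ∀ i : Fin (n+1),
      (C₀ * β * gg n x ^ (-(β/2)-1) * (x i + ee n i) + a i)^2
      = ((C₀*β)*(gg n x ^ (-(β/2)-1)))*((C₀*β)*(gg n x ^ (-(β/2)-1)))*((x i + ee n i)^2)
        + (2*((C₀*β)*(gg n x ^ (-(β/2)-1))))*((x i + ee n i) * a i) + (a i)^2 :=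
    fun i => by ring
  rw [Finset.sum_congr rfl fun i _ => hterm i, Finset.sum_add_distrib,
    Finset.sum_add_distrib, ← Finset.mul_sum, ← Finset.mul_sum, hS]

lemma bdry0 {n : ℕ} (C₀ β : ℝ) (hC₀ : 0 ≤ C₀) (hβ : 0 ≤ β) (x : Fin (n+1) → ℝ) (t : ℝ)
    (hx : x (Fin.last n) = 0) (ht : t ≤ 0) : 0 ≤ barrierV C₀ β x t := by
  rw [barrier_eq]
  have h1 : 1 ≤ gg n x := by
    rw [gg_eq, hx]
    have := Finset.sum_nonneg fun i (_ : i ∈ Finset.univ) => sq_nonneg (x i)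
    linarith
  have h2 : gg n x ^ (-(β/2)) ≤ 1 :=
    Real.rpow_le_one_of_one_le_of_nonpos h1 (by linarith)
  have h3 : 0 ≤ C₀ * (1 - gg n x ^ (-(β/2))) := mul_nonneg hC₀ (by linarith)
  linarith

lemma bdry1 {n : ℕ} (C₀ β : ℝ) (hC₀ : 4 ≤ C₀) (hβ : 1 ≤ β) (x : Fin (n+1) → ℝ) (t : ℝ)
    (hxl : 0 ≤ x (Fin.last n)) (hxb : (∑ i, (x i)^2) ≤ 1) (ht1 : -1 ≤ t) (ht0 : t ≤ 0)
    (hcase : (∑ i, (x i)^2) = 1 ∨ t = -1) : 1 ≤ barrierV C₀ β x t := by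
  rw [barrier_eq]
  have hsum0 : (0:ℝ) ≤ ∑ i, (x i)^2 := Finset.sum_nonneg fun i _ => sq_nonneg _
  have h1 : 1 ≤ gg n x := by rw [gg_eq]; linarith
  have h0 : (0:ℝ) < gg n x := lt_of_lt_of_le one_pos h1
  have h2 : gg n x ^ (-(β/2)) ≤ 1 :=
    Real.rpow_le_one_of_one_le_of_nonpos h1 (by linarith)
  have h2' : 0 < gg n x ^ (-(β/2)) := Real.rpow_pos_of_pos h0 _
  rcases hcase with hcase | hcase
  · -- |x| = 1 : gg = 2 + 2 x_n ≥ 2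
    have hgg2 : (2:ℝ) ≤ gg n x := by rw [gg_eq, hcase]; linarith
    have h3 : gg n x ^ (-(β/2)) ≤ (2:ℝ) ^ (-(β/2)) :=
      Real.rpow_le_rpow_of_nonpos two_pos hgg2 (by linarith)
    have h4 : (2:ℝ) ^ (-(β/2)) ≤ (2:ℝ) ^ (-(1/2) : ℝ) :=
      Real.rpow_le_rpow_of_exponent_le (by norm_num) (by linarith)
    have h5 : (2:ℝ) ^ (-(1/2) : ℝ) ≤ 3/4 := by
      rw [Real.rpow_neg (by norm_num : (0:ℝ) ≤ 2), ← Real.sqrt_eq_rpow]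
      have hs := Real.sq_sqrt (by norm_num : (0:ℝ) ≤ 2)
      have hnn := Real.sqrt_nonneg 2
      have h43 : (4/3 : ℝ) ≤ Real.sqrt 2 := by nlinarith
      have := one_div_le_one_div_of_le (by norm_num : (0:ℝ) < 4/3) h43
      rw [one_div] at this
      linarith
    have h6 : gg n x ^ (-(β/2)) ≤ 3/4 := by linarith
    have h7 : (1:ℝ) ≤ C₀ * (1 - gg n x ^ (-(β/2))) := by
      calc (1:ℝ) = 4 * (1/4) := by norm_num
        _ ≤ C₀ * (1 - gg n x ^ (-(β/2))) := by
            apply mul_le_mul hC₀ (by linarith) (by norm_num) (by linarith)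
    linarith
  · -- t = -1
    subst hcase
    have h3 : 0 ≤ C₀ * (1 - gg n x ^ (-(β/2))) := mul_nonneg (by linarith) (by linarith)
    linarith

lemma item4 {n : ℕ} (C₀ β : ℝ) (hC₀ : 1 ≤ C₀) (hβ : 1 ≤ β) (xn : ℝ) (h0 : 0 ≤ xn)
    (h12 : xn ≤ 1/2) :
    barrierV C₀ β (fun i => if i = Fin.last n then xn else 0) 0 ≤ C₀ * β * xn := by
  rw [barrier_eq]
  have hsq : (∑ i : Fin (n+1), ((if i = Fin.last n then xn else 0):ℝ)^2) = xn^2 := by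
    have h : ∀ i : Fin (n+1), ((if i = Fin.last n then xn else 0):ℝ)^2
        = (if i = Fin.last n then xn^2 else 0) := by
      intro i; by_cases h : i = Fin.last n <;> simp [h]
    rw [Finset.sum_congr rfl fun i _ => h i, Finset.sum_ite_eq']
    simp
  have hgg : gg n (fun i => if i = Fin.last n then xn else 0) = (1 + xn)^2 := by
    rw [gg_eq]
    simp only [if_pos rfl]
    rw [hsq]; simp only [if_true]; ring
  have hx1 : (0:ℝ) < 1 + xn := by linarith
  have hgr : gg n (fun i => if i = Fin.last n then xn else 0) ^ (-(β/2)) = (1+xn) ^ (-β) := by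
    rw [hgg, ← Real.rpow_natCast (1+xn) 2, ← Real.rpow_mul hx1.le]
    congr 1; push_cast; ring
  rw [hgr]
  have hbx : (0:ℝ) ≤ β * xn := mul_nonneg (by linarith) h0
  have hs' : (-1:ℝ) ≤ -(xn/(1+xn)) := by
    have : xn/(1+xn) ≤ 1 := by rw [div_le_one hx1]; linarith
    linarith
  have hb := one_add_mul_self_le_rpow_one_add hs' hβ
  have hid : 1 + (-(xn/(1+xn))) = (1+xn)⁻¹ := by field_simp; ring
  rw [hid] at hb
  have hinvr : ((1+xn)⁻¹) ^ β = (1+xn) ^ (-β) := by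
    rw [← Real.rpow_neg_one (1+xn), ← Real.rpow_mul hx1.le]
    congr 1; ring
  rw [hinvr] at hb
  have hdd : xn/(1+xn) ≤ xn := div_le_self h0 (by linarith)
  have hmul : β * (xn/(1+xn)) ≤ β * xn :=
    mul_le_mul_of_nonneg_left hdd (by linarith)
  have hmain : 1 - (1+xn) ^ (-β) ≤ β * xn := by
    have : 1 + β * (-(xn/(1+xn))) = 1 - β * (xn/(1+xn)) := by ring
    rw [this] at hb
    linarith
  have hC0 : (0:ℝ) ≤ C₀ := by linarith
  calc C₀ * (1 - (1+xn) ^ (-β)) - 0 = C₀ * (1 - (1+xn) ^ (-β)) := by ring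
    _ ≤ C₀ * (β * xn) := mul_le_mul_of_nonneg_left hmain hC0
    _ = C₀ * β * xn := by ring


set_option maxHeartbeats 1000000 in
/-- Barrier for the boundary Lipschitz estimate (Lemma 3.1): for `γ > -1`, `p > 1` and
`C > 0` there are `β ≥ 1`, `C₀ > 0` (depending only on `n, γ, p, C`) such that
`v(x,t) = C₀(1-|x+e_n|^{-β}) - t` is a strict supersolution of `P^ε_a v = 0` in `Q₁⁺`
for every `|a| ≤ 1`, `ε ∈ [0,1]` with `|Dv+a|²+ε² > 0`; moreover `v ≥ 0` on `S₁`,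
`v ≥ 1` on `∂_p Q₁⁺ \ S₁`, and `v(0', x_n, 0) ≤ C' x_n` for `0 ≤ x_n ≤ 1/2`. -/
theorem stmt_15 {n : ℕ} (γ p C : ℝ) (hγ : -1 < γ) (hp : 1 < p) (hC : 0 < C) :
    ∃ β : ℝ, 1 ≤ β ∧ ∃ C₀ : ℝ, 0 < C₀ ∧
      (∀ (a : Fin (n + 1) → ℝ) (ε : ℝ),
        (∑ i, (a i) ^ 2) ≤ 1 → ε ∈ Set.Icc (0 : ℝ) 1 →
        ∀ (x : Fin (n + 1) → ℝ) (t : ℝ),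
          (∑ i, (x i) ^ 2) < 1 → 0 < x (Fin.last n) → t ∈ Set.Ioc (-1 : ℝ) 0 →
          0 < ∑ i, (spaceGrad (barrierV C₀ β) x t i + a i) ^ 2 + ε ^ 2 →
          0 < Pop γ p ε a (barrierV C₀ β) x t) ∧
      (∀ (x : Fin (n + 1) → ℝ) (t : ℝ),
        (∑ i, (x i) ^ 2) < 1 → x (Fin.last n) = 0 → t ∈ Set.Ioc (-1 : ℝ) 0 →
        0 ≤ barrierV C₀ β x t) ∧
      (∀ (x : Fin (n + 1) → ℝ) (t : ℝ),
        0 ≤ x (Fin.last n) → (∑ i, (x i) ^ 2) ≤ 1 → -1 ≤ t → t ≤ 0 →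
        ((∑ i, (x i) ^ 2) = 1 ∨ t = -1) →
        1 ≤ barrierV C₀ β x t) ∧
      ∃ C' : ℝ, 0 < C' ∧ ∀ xn : ℝ, 0 ≤ xn → xn ≤ 1 / 2 →
        barrierV C₀ β (fun i => if i = Fin.last n then xn else 0) 0 ≤ C' * xn := by
  set β : ℝ := max (max 1 ((n:ℝ) + p)) (((n:ℝ) + 4)/(p - 1) + 2) with hβdef
  have hβ1 : 1 ≤ β := le_trans (le_max_left _ _) (le_max_left _ _)
  have hβa : (n:ℝ) + p ≤ β := le_trans (le_max_right _ _) (le_max_left _ _)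
  have hβb : ((n:ℝ) + 4)/(p - 1) + 2 ≤ β := le_max_right _ _
  set C₀ : ℝ := max 4 (max ((2:ℝ)^(β+2)) (((2:ℝ) * 4^(β/2+1)) ^ (1/(1 + min γ 0)))) with hC₀def
  have hC₀4 : (4:ℝ) ≤ C₀ := le_max_left _ _
  have hC₀pos : (0:ℝ) < C₀ := by linarith
  have hC₀K : C₀ ≤ C₀ * β := le_mul_of_one_le_right hC₀pos.le hβ1
  have hK1 : (2:ℝ)^(β+2) ≤ C₀ * β :=
    le_trans (le_trans (le_max_left _ _) (le_max_right _ _)) hC₀K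
  have hK2 : (2:ℝ) ≤ C₀ * β := by linarith
  have hKθ : ((2:ℝ) * 4^(β/2+1)) ^ (1/(1 + min γ 0)) ≤ C₀ * β :=
    le_trans (le_trans (le_max_right _ _) (le_max_right _ _)) hC₀K
  clear_value β C₀
  refine ⟨β, hβ1, C₀, hC₀pos, ?_, ?_, ?_, ⟨C₀ * β, by positivity, ?_⟩⟩
  · intro a ε ha hε x t h1 h2 h3 _
    exact pde_bullet γ p β C₀ hγ hp hβ1 hβa hβb hK1 hK2 hKθ a ε ha hε x t h1 h2 h3
  · intro x t _ h2 h3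
    exact bdry0 C₀ β (by linarith) (by linarith) x t h2 h3.2
  · intro x t h1 h2 h3 h4 h5
    exact bdry1 C₀ β hC₀4 hβ1 x t h1 h2 h3 h4 h5
  · intro xn h0 h12
    exact item4 C₀ β (by linarith) hβ1 xn h0 h12
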